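/- Let n be a natural number and let f : ℝⁿ → ℝⁿ be a C¹ diffeomorphism (f is bijective, and both f and its inverse are continuously differentiable). Let φ : ℝⁿ → [0,∞] be a Borel measurable function and let μ = volume.withDensity φ be invariant under f (Measure.map f μ = μ). Then for every natural number k ≥ 1, for Lebesgue-almost every x ∈ ℝⁿ one has φ(f^[k](x)) · |det D(f^[k])(x)| = φ(x), where f^[k] denotes the k-th iterate of f and D(f^[k])(x) its derivative at x. -/

import Mathlib

open MeasureTheory
open scoped ENNReal

/-- The iterated almost-everywhere cocycle equation `φ(fᵏ x) · |det D(fᵏ)(x)| = φ(x)`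
satisfied by the density `φ` of an absolutely continuous invariant measure of a `C¹`
diffeomorphism of `ℝⁿ`. -/
theorem acip_density_cocycle_iterate (n : ℕ)
    (f : EuclideanSpace ℝ (Fin n) → EuclideanSpace ℝ (Fin n))
    (hbij : Function.Bijective f)
    (hf : ContDiff ℝ 1 f)
    (hfinv : ContDiff ℝ 1 (Function.invFun f))
    (φ : EuclideanSpace ℝ (Fin n) → ℝ≥0∞)
    (hφ : Measurable φ)
    (hinv : Measure.map f (volume.withDensity φ) = volume.withDensity φ)
    (k : ℕ) (hk : 1 ≤ k) :
    ∀ᵐ x ∂(volume : Measure (EuclideanSpace ℝ (Fin n))),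
      φ (f^[k] x) * ENNReal.ofReal |(fderiv ℝ (f^[k]) x).det| = φ x := by
  set μ := volume.withDensity φ with hμ
  set g : EuclideanSpace ℝ (Fin n) → EuclideanSpace ℝ (Fin n) := f^[k] with hgdef
  have hfm : Measurable f := hf.continuous.measurable
  have hgm : Measurable g := (hf.continuous.iterate k).measurable
  have hgbij : Function.Bijective g := hbij.iterate k
  have hgdiff : Differentiable ℝ g := (hf.differentiable one_ne_zero).iterate k
  -- the inverse of g : it is `(invFun f)^[k]`
  have hli : Function.LeftInverse (Function.invFun f) f :=
    Function.leftInverse_invFun hbij.1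
  have hri : Function.RightInverse (Function.invFun f) f :=
    Function.rightInverse_invFun hbij.2
  have hgli : Function.LeftInverse ((Function.invFun f)^[k]) g := hli.iterate k
  have hgri : Function.RightInverse ((Function.invFun f)^[k]) g := hri.iterate k
  have hhm : Measurable ((Function.invFun f)^[k]) :=
    (hfinv.continuous.iterate k).measurable
  -- invariance of μ under g
  have hinvg : Measure.map g μ = μ := by
    rw [hgdef]
    have : ∀ m : ℕ, Measure.map f^[m] μ = μ := by
      intro m
      induction m with
      | zero => simp [Measure.map_id]
      | succ m ih =>
        rw [Function.iterate_succ', ← Measure.map_map hfm (hfm.iterate m), ih, hinv]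
    exact this k
  -- image of a measurable set under g is measurable
  have himage : ∀ s : Set (EuclideanSpace ℝ (Fin n)), g '' s = ((Function.invFun f)^[k]) ⁻¹' s := by
    intro s
    ext x
    constructor
    · rintro ⟨y, hy, rfl⟩
      simpa [hgli y] using hy
    · intro hx
      exact ⟨(Function.invFun f)^[k] x, hx, hgri x⟩
  -- the key set-integral identity
  have key : ∀ s : Set (EuclideanSpace ℝ (Fin n)), MeasurableSet s →
      ∫⁻ x in s, φ (g x) * ENNReal.ofReal |(fderiv ℝ g x).det| ∂volume
        = ∫⁻ x in s, φ x ∂volume := by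
    intro s hs
    have hims : MeasurableSet (g '' s) := by rw [himage]; exact hhm hs
    have hμs : μ (g '' s) = μ s := by
      conv_lhs => rw [← hinvg]
      rw [Measure.map_apply hgm hims, Set.preimage_image_eq s hgbij.1]
    have hcov := lintegral_image_eq_lintegral_abs_det_fderiv_mul volume hs
      (fun x _ => (hgdiff x).hasFDerivAt.hasFDerivWithinAt) (hgbij.1.injOn) φ
    have h1 : ∫⁻ x in g '' s, φ x ∂volume = ∫⁻ x in s, φ x ∂volume := by
      rw [← withDensity_apply φ hims, ← withDensity_apply φ hs]
      exact hμs
    calc ∫⁻ x in s, φ (g x) * ENNReal.ofReal |(fderiv ℝ g x).det| ∂volume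
        = ∫⁻ x in s, ENNReal.ofReal |(fderiv ℝ g x).det| * φ (g x) ∂volume := by
          simp_rw [mul_comm]
      _ = ∫⁻ x in g '' s, φ x ∂volume := hcov.symm
      _ = ∫⁻ x in s, φ x ∂volume := h1
  have hmeas : Measurable fun x => φ (g x) * ENNReal.ofReal |(fderiv ℝ g x).det| := by
    apply (hφ.comp hgm).mul
    exact ENNReal.measurable_ofReal.comp
      ((ContinuousLinearMap.continuous_det.measurable.comp (measurable_fderiv ℝ g)).abs)
  exact ae_eq_of_forall_setLIntegral_eq_of_sigmaFinite hmeas hφ fun s hs _ => key s hs
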